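/- The set H₁ = {±(1,0), ±(0,1), ±(1,2), ±(2,1)} is a nonseparating subset of ℤ/4ℤ ⊕ ℤ/4ℤ. -/

import Mathlib

def middleTwoEq (c : Fin 4 → ℕ) : Prop :=
  (Multiset.sort {c 0, c 1, c 2, c 3} (· ≤ ·)).getD 1 0 =
  (Multiset.sort {c 0, c 1, c 2, c 3} (· ≤ ·)).getD 2 0

/-- `c` is the coset number of the pair `{x, -x}` relative to `B` and the
generator `a + B` of `A ⧸ B`: `0 ≤ c ≤ n/2` and `(c • a + B) ∩ {x, -x} ≠ ∅`. -/
def IsCosetNum {A : Type*} [AddCommGroup A] (B : AddSubgroup A) (a x : A) (c : ℕ) : Prop :=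
  c ≤ Nat.card (A ⧸ B) / 2 ∧ (x - c • a ∈ B ∨ x + c • a ∈ B)

/-- The four pairs `{± h i}` are disjoint and for every cyclic subgroup `B` with
cyclic quotient and every generator of the quotient, the middle two of the four
coset numbers agree. -/
def NonsepTuple {A : Type*} [AddCommGroup A] (h : Fin 4 → A) : Prop :=
  (∀ i j : Fin 4, i ≠ j → h i ≠ h j ∧ h i ≠ -h j) ∧
  ∀ B : AddSubgroup A, IsAddCyclic B → IsAddCyclic (A ⧸ B) →
    ∀ a : A, (∀ x : A ⧸ B, x ∈ AddSubgroup.zmultiples ((QuotientAddGroup.mk a : A ⧸ B))) →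
      ∀ c : Fin 4 → ℕ, (∀ i, IsCosetNum B a (h i) (c i)) → middleTwoEq c

/-- `H` is a nonseparating subset of `A`. -/
def IsNonseparating {A : Type*} [AddCommGroup A] (H : Set A) : Prop :=
  ∃ h : Fin 4 → A, H = (⋃ i, {h i, -h i}) ∧ NonsepTuple h

/- ### Auxiliary material -/

/-- The tuple of elements. -/
def hhTup : Fin 4 → ZMod 4 × ZMod 4 := fun i =>
  match i with
  | 0 => (1, 0)
  | 1 => (0, 1)
  | 2 => (1, 2)
  | 3 => (2, 1)

lemma exp4 : ∀ x : ZMod 4 × ZMod 4, (4 : ℕ) • x = 0 := by decide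

lemma zsmul_red (k : ℤ) (x : ZMod 4 × ZMod 4) : k • x = ((k % 4).toNat : ℕ) • x := by
  have h4 : (4 : ℤ) • x = 0 := by
    calc (4 : ℤ) • x = ((4 : ℕ) : ℤ) • x := by norm_num
    _ = (4 : ℕ) • x := natCast_zsmul x 4
    _ = 0 := exp4 x
  conv_lhs => rw [← Int.mul_ediv_add_emod k 4]
  rw [add_zsmul, mul_comm, mul_zsmul, h4, smul_zero, zero_add, ← natCast_zsmul,
    Int.toNat_of_nonneg (Int.emod_nonneg k (by norm_num))]

lemma mem_zm (g x : ZMod 4 × ZMod 4) :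
    x ∈ AddSubgroup.zmultiples g ↔ ∃ m : Fin 4, x = (m : ℕ) • g := by
  rw [AddSubgroup.mem_zmultiples_iff]
  constructor
  · rintro ⟨k, rfl⟩
    exact ⟨⟨(k % 4).toNat, by omega⟩, zsmul_red k g⟩
  · rintro ⟨m, rfl⟩
    exact ⟨((m : ℕ) : ℤ), natCast_zsmul g (m : ℕ)⟩

lemma cyclic_eq_zmultiples {A : Type*} [AddCommGroup A] (B : AddSubgroup A)
    (hB : IsAddCyclic B) : ∃ g : A, B = AddSubgroup.zmultiples g := by
  obtain ⟨⟨g, hgB⟩, hgen⟩ := hB.exists_generator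
  refine ⟨g, le_antisymm ?_ ?_⟩
  · intro x hx
    obtain ⟨k, hk⟩ := AddSubgroup.mem_zmultiples_iff.mp (hgen ⟨x, hx⟩)
    exact AddSubgroup.mem_zmultiples_iff.mpr ⟨k, by simpa using congrArg Subtype.val hk⟩
  · intro x hx
    obtain ⟨k, rfl⟩ := AddSubgroup.mem_zmultiples_iff.mp hx
    exact AddSubgroup.zsmul_mem B hgB k

set_option maxRecDepth 100000 in
set_option maxHeartbeats 4000000 in
set_option synthInstance.maxHeartbeats 2000000 in
set_option synthInstance.maxSize 2000 in
lemma core : ∀ g a : ZMod 4 × ZMod 4,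
    (∃ n m : Fin 4, (n:ℕ) • a + (m:ℕ) • g = ((1,0) : ZMod 4 × ZMod 4)) →
    (∃ n m : Fin 4, (n:ℕ) • a + (m:ℕ) • g = ((0,1) : ZMod 4 × ZMod 4)) →
    ∀ c0 c1 c2 c3 : Fin 3,
    ((∃ m : Fin 4, ((1,0) : ZMod 4 × ZMod 4) - (c0:ℕ) • a = (m:ℕ) • g) ∨
     (∃ m : Fin 4, ((1,0) : ZMod 4 × ZMod 4) + (c0:ℕ) • a = (m:ℕ) • g)) →
    ((∃ m : Fin 4, ((0,1) : ZMod 4 × ZMod 4) - (c1:ℕ) • a = (m:ℕ) • g) ∨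
     (∃ m : Fin 4, ((0,1) : ZMod 4 × ZMod 4) + (c1:ℕ) • a = (m:ℕ) • g)) →
    ((∃ m : Fin 4, ((1,2) : ZMod 4 × ZMod 4) - (c2:ℕ) • a = (m:ℕ) • g) ∨
     (∃ m : Fin 4, ((1,2) : ZMod 4 × ZMod 4) + (c2:ℕ) • a = (m:ℕ) • g)) →
    ((∃ m : Fin 4, ((2,1) : ZMod 4 × ZMod 4) - (c3:ℕ) • a = (m:ℕ) • g) ∨
     (∃ m : Fin 4, ((2,1) : ZMod 4 × ZMod 4) + (c3:ℕ) • a = (m:ℕ) • g)) →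
    ({((c0 : ℕ)), (c1 : ℕ), (c2 : ℕ), (c3 : ℕ)} : Multiset ℕ) = {0,1,1,2} ∨
    ({((c0 : ℕ)), (c1 : ℕ), (c2 : ℕ), (c3 : ℕ)} : Multiset ℕ) = {1,1,1,1} := by decide

lemma sort_eq_of (l : List ℕ) (s : Multiset ℕ) (h : s = ↑l) (hl : l.Pairwise (· ≤ ·)) :
    Multiset.sort s (· ≤ ·) = l := by
  refine List.Perm.eq_of_pairwise' (Multiset.pairwise_sort _ _) hl ?_
  rw [← Multiset.coe_eq_coe, Multiset.sort_eq, h]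

lemma setlem : ∀ x : ZMod 4 × ZMod 4,
    (x = (1,0) ∨ x = -(1,0) ∨ x = (0,1) ∨ x = -(0,1) ∨ x = (1,2) ∨ x = -(1,2) ∨
      x = (2,1) ∨ x = -(2,1)) ↔ ∃ i : Fin 4, x = hhTup i ∨ x = -hhTup i := by decide

/-- `H₁ = {±(1,0), ±(0,1), ±(1,2), ±(2,1)}` is a nonseparating subset of `ℤ/4ℤ ⊕ ℤ/4ℤ`. -/
theorem stmt_7 :
    IsNonseparating ({(1, 0), -(1, 0), (0, 1), -(0, 1), (1, 2), -(1, 2), (2, 1), -(2, 1)} :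
      Set (ZMod 4 × ZMod 4)) := by
  refine ⟨hhTup, ?_, ?_, ?_⟩
  · apply Set.ext
    intro x
    simp only [Set.mem_insert_iff, Set.mem_singleton_iff, Set.mem_iUnion]
    exact setlem x
  · decide
  · intro B hB _hQ a ha c hc
    obtain ⟨g, rfl⟩ := cyclic_eq_zmultiples B hB
    -- representations
    have hy : ∀ y : ZMod 4 × ZMod 4,
        ∃ n m : Fin 4, (n:ℕ) • a + (m:ℕ) • g = y := by
      intro y
      obtain ⟨k, hk⟩ := AddSubgroup.mem_zmultiples_iff.mp (ha (QuotientAddGroup.mk y))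
      have hk' : QuotientAddGroup.mk (k • a) = (QuotientAddGroup.mk y :
          (ZMod 4 × ZMod 4) ⧸ AddSubgroup.zmultiples g) := by
        rw [QuotientAddGroup.mk_zsmul]; exact hk
      have hmem : k • a - y ∈ AddSubgroup.zmultiples g :=
        QuotientAddGroup.eq_iff_sub_mem.mp hk'
      obtain ⟨m, hm⟩ := (mem_zm g _).mp (AddSubgroup.neg_mem _ hmem)
      refine ⟨⟨(k % 4).toNat, by omega⟩, m, ?_⟩
      have : ((((k % 4).toNat : ℕ)) : ℕ) • a = k • a := (zsmul_red k a).symm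
      calc (((⟨(k % 4).toNat, by omega⟩ : Fin 4) : ℕ)) • a + (m:ℕ) • g
          = k • a + (y - k • a) := by rw [this, ← hm]; abel
        _ = y := by abel
    -- cardinality bound
    have htop : AddSubgroup.zmultiples (QuotientAddGroup.mk a :
        (ZMod 4 × ZMod 4) ⧸ AddSubgroup.zmultiples g) = ⊤ :=
      (AddSubgroup.eq_top_iff' _).mpr ha
    have hcard : Nat.card ((ZMod 4 × ZMod 4) ⧸ AddSubgroup.zmultiples g) ≤ 4 := by
      have h1 : Nat.card ((ZMod 4 × ZMod 4) ⧸ AddSubgroup.zmultiples g)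
          = addOrderOf (QuotientAddGroup.mk a :
            (ZMod 4 × ZMod 4) ⧸ AddSubgroup.zmultiples g) := by
        rw [← Nat.card_zmultiples, htop]
        exact (Nat.card_congr AddSubgroup.topEquiv.toEquiv).symm
      rw [h1]
      refine Nat.le_of_dvd (by norm_num) (addOrderOf_dvd_of_nsmul_eq_zero ?_)
      rw [← QuotientAddGroup.mk_nsmul, exp4]
      rfl
    have hle : ∀ i, c i ≤ 2 := by
      intro i
      have := (hc i).1
      omega
    -- apply core
    have h10 := hy (1, 0)
    have h01 := hy (0, 1)
    have cond : ∀ i : Fin 4,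
        (∃ m : Fin 4, hhTup i - c i • a = (m:ℕ) • g) ∨
        (∃ m : Fin 4, hhTup i + c i • a = (m:ℕ) • g) := by
      intro i
      rcases (hc i).2 with h | h
      · exact Or.inl ((mem_zm g _).mp h)
      · exact Or.inr ((mem_zm g _).mp h)
    have hmc : ({c 0, c 1, c 2, c 3} : Multiset ℕ) = {0,1,1,2} ∨
        ({c 0, c 1, c 2, c 3} : Multiset ℕ) = {1,1,1,1} :=
      core g a h10 h01
        ⟨c 0, by have := hle 0; omega⟩ ⟨c 1, by have := hle 1; omega⟩
        ⟨c 2, by have := hle 2; omega⟩ ⟨c 3, by have := hle 3; omega⟩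
        (cond 0) (cond 1) (cond 2) (cond 3)
    unfold middleTwoEq
    rcases hmc with h | h
    · rw [h, sort_eq_of [0,1,1,2] {0,1,1,2} rfl (by decide)]; rfl
    · rw [h, sort_eq_of [1,1,1,1] {1,1,1,1} rfl (by decide)]; rfl
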